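/- In the translation-type model X(θ) = T_θ(U), let V be an open subset of ℝ^d whose topological boundary has Lebesgue measure zero, and let φ = 1_V be its indicator test. If β_φ(0) = α and β_φ(θ) → 1 as ‖θ‖ → ∞, then φ is a regular test of level α: β_φ(0) = α, θ ↦ β_φ(θ) is continuous on ℝ^p, and 1 − β_φ vanishes at infinity; that is, φ ∈ Φ₀(α). -/

import Mathlib

open MeasureTheory Topology Filter

/- STATEMENT 4: In the translation-type model X(θ) = T_θ(U), if V ⊆ ℝ^d is open with
Lebesgue-null boundary, φ = 1_V has size α and β_φ(θ) → 1 as ‖θ‖ → ∞, then φ is a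
regular test of level α: β_φ(0) = α, θ ↦ β_φ(θ) is continuous on ℝ^p and 1 − β_φ
vanishes at infinity. -/
theorem stmt_4 (d p : ℕ)
    (μ : Measure (EuclideanSpace ℝ (Fin d))) [IsProbabilityMeasure μ]
    (fU : EuclideanSpace ℝ (Fin d) → ℝ) (hfU_pos : ∀ u, 0 < fU u)
    (hμ : μ = volume.withDensity (fun u => ENNReal.ofReal (fU u)))
    (T : EuclideanSpace ℝ (Fin p) → EuclideanSpace ℝ (Fin d) → EuclideanSpace ℝ (Fin d))
    (hT_meas : ∀ θ, Measurable (T θ))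
    (hT_bij : ∀ θ, Function.Bijective (T θ))
    -- (T1) : θ ↦ T_θ(u) is continuous
    (hT1 : ∀ u, Continuous fun θ => T θ u)
    -- (T2) : ‖T_θ(u)‖ → ∞ as ‖θ‖ → ∞
    (hT2 : ∀ u, ∀ M : ℝ, ∃ R : ℝ, ∀ θ, R < ‖θ‖ → M < ‖T θ u‖)
    -- the law of X(θ) = T_θ(U) has a density with respect to Lebesgue measure
    (hac : ∀ θ, Measure.map (T θ) μ ≪ volume)
    (α : ℝ) (hα : α ∈ Set.Ioo (0 : ℝ) 1)
    (V : Set (EuclideanSpace ℝ (Fin d))) (hV : IsOpen V)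
    (hVb : volume (frontier V) = 0)
    -- power function of the indicator test φ = 1_V
    (β : EuclideanSpace ℝ (Fin p) → ℝ)
    (hβ : β = fun θ => ((Measure.map (T θ) μ) V).toReal)
    -- (I) size α; (II) power tends to one at infinity
    (hI : β 0 = α)
    (hII : ∀ ε : ℝ, 0 < ε → ∃ R : ℝ, ∀ θ, R < ‖θ‖ → 1 - ε < β θ) :
    β 0 = α ∧ Continuous β ∧
      (∀ ε : ℝ, 0 < ε → ∃ K : Set (EuclideanSpace ℝ (Fin p)), IsCompact K ∧
        {θ : EuclideanSpace ℝ (Fin p) | ε ≤ 1 - β θ} ⊆ K) := by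
  refine ⟨hI, ?_, ?_⟩
  · -- continuity
    have hVm : MeasurableSet V := hV.measurableSet
    have key : β = fun θ => ∫ u, Set.indicator V (fun _ => (1:ℝ)) (T θ u) ∂μ := by
      rw [hβ]; funext θ
      rw [Measure.map_apply (hT_meas θ) hVm]
      have heq : (fun u => Set.indicator V (fun _ => (1:ℝ)) (T θ u))
          = Set.indicator ((T θ) ⁻¹' V) (fun _ => (1:ℝ)) := by
        ext u; rfl
      rw [heq]
      rw [show (fun _ : EuclideanSpace ℝ (Fin d) => (1:ℝ)) = (1 : EuclideanSpace ℝ (Fin d) → ℝ) from rfl,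
        integral_indicator_one ((hT_meas θ) hVm)]
      rfl
    rw [key]
    rw [continuous_iff_seqContinuous]
    intro x θ hx
    apply tendsto_integral_of_dominated_convergence (fun _ => (1:ℝ))
    · intro n
      exact ((measurable_const.indicator hVm).comp (hT_meas (x n))).aestronglyMeasurable
    · exact integrable_const 1
    · intro n
      filter_upwards with u
      calc ‖Set.indicator V (fun _ => (1:ℝ)) (T (x n) u)‖
          ≤ ‖(1:ℝ)‖ := norm_indicator_le_norm_self _ _
        _ = 1 := norm_one
    · -- a.e. convergence
      have hN : μ {u | T θ u ∈ frontier V} = 0 := by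
        have : {u | T θ u ∈ frontier V} = (T θ) ⁻¹' (frontier V) := rfl
        rw [this, ← Measure.map_apply (hT_meas θ) isClosed_frontier.measurableSet]
        exact hac θ hVb
      filter_upwards [measure_eq_zero_iff_ae_notMem.mp hN] with u hu
      have htend : Filter.Tendsto (fun n => T (x n) u) Filter.atTop (𝓝 (T θ u)) :=
        ((hT1 u).tendsto θ).comp hx
      have hcases : T θ u ∈ V ∨ T θ u ∉ closure V := by
        by_cases h1 : T θ u ∈ V
        · exact Or.inl h1
        · right
          intro hc
          exact hu ⟨hc, by rwa [hV.interior_eq]⟩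
      rcases hcases with h | h
      · have hev : ∀ᶠ n in Filter.atTop, T (x n) u ∈ V :=
          htend.eventually (hV.mem_nhds h)
        have : (fun n => Set.indicator V (fun _ => (1:ℝ)) (T (x n) u))
            =ᶠ[Filter.atTop] fun _ => (1:ℝ) := by
          filter_upwards [hev] with n hn
          simp [Set.indicator_apply, hn]
        rw [show Set.indicator V (fun _ => (1:ℝ)) (T θ u) = 1 by
          simp [Set.indicator_apply, h]]
        exact Filter.Tendsto.congr' this.symm tendsto_const_nhds
      · have hev : ∀ᶠ n in Filter.atTop, T (x n) u ∈ (closure V)ᶜ :=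
          htend.eventually (isClosed_closure.isOpen_compl.mem_nhds h)
        have : (fun n => Set.indicator V (fun _ => (1:ℝ)) (T (x n) u))
            =ᶠ[Filter.atTop] fun _ => (0:ℝ) := by
          filter_upwards [hev] with n hn
          have : T (x n) u ∉ V := fun hmem => hn (subset_closure hmem)
          simp [Set.indicator_apply, this]
        rw [show Set.indicator V (fun _ => (1:ℝ)) (T θ u) = 0 by
          have : T θ u ∉ V := fun hmem => h (subset_closure hmem)
          simp [Set.indicator_apply, this]]
        exact Filter.Tendsto.congr' this.symm tendsto_const_nhds
  · -- vanishing at infinity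
    intro ε hε
    obtain ⟨R, hR⟩ := hII ε hε
    refine ⟨Metric.closedBall 0 R, isCompact_closedBall 0 R, ?_⟩
    intro θ hθ
    simp only [Set.mem_setOf_eq] at hθ
    rw [Metric.mem_closedBall, dist_zero_right]
    by_contra hcon
    push_neg at hcon
    have := hR θ hcon
    linarith
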